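/- If y ∈ (-π, 0) and x = -y·cot(y), then x > -1; hence every solution z = x + iy of z e^z = -e^{τ²-1} with Im(z) ∈ (-π, 0) lies in the region R = {z ∈ ℂ : Re(z) > -1, Im(z) ∈ (-π, 0)}. -/
import Mathlib


open Complex

lemma sin_lt_mul_cos {y : ℝ} (h1 : -Real.pi < y) (h2 : y < 0) :
    Real.sin y < y * Real.cos y := by
  have hs : Real.sin y < 0 := Real.sin_neg_of_neg_of_neg_pi_lt h2 h1
  rcases le_or_gt y (-(Real.pi / 2)) with h | h
  · have hc : Real.cos y ≤ 0 := by
      have := Real.cos_nonpos_of_pi_div_two_le_of_le (x := -y)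
        (by linarith) (by linarith [Real.pi_pos])
      rwa [Real.cos_neg] at this
    nlinarith
  · have hc : 0 < Real.cos y := Real.cos_pos_of_mem_Ioo ⟨h, by linarith [Real.pi_pos]⟩
    have ht : -y < Real.tan (-y) := Real.lt_tan (by linarith) (by linarith)
    rw [Real.tan_neg, Real.tan_eq_sin_div_cos] at ht
    have h2' : Real.sin y / Real.cos y < y := by linarith
    have := (div_lt_iff₀ hc).mp h2'
    linarith

theorem region_R :
    (∀ y ∈ Set.Ioo (-Real.pi) (0 : ℝ),
      -y * (Real.cos y / Real.sin y) > -1) ∧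
    (∀ τ : ℝ, 0 < τ → ∀ z : ℂ,
      z * Complex.exp z = -Complex.exp ((τ : ℂ) ^ 2 - 1) →
      z.im ∈ Set.Ioo (-Real.pi) 0 → z.re > -1) := by
  have key : ∀ y ∈ Set.Ioo (-Real.pi) (0 : ℝ),
      -y * (Real.cos y / Real.sin y) > -1 := by
    intro y ⟨h1, h2⟩
    have hs : Real.sin y < 0 := Real.sin_neg_of_neg_of_neg_pi_lt h2 h1
    have h := sin_lt_mul_cos h1 h2
    rw [gt_iff_lt, show -y * (Real.cos y / Real.sin y) = (-y * Real.cos y) / Real.sin y by ring,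
      lt_div_iff_of_neg hs]
    nlinarith
  refine ⟨key, ?_⟩
  intro τ hτ z hz ⟨h1, h2⟩
  have him : (z * Complex.exp z).im = 0 := by
    rw [hz]
    have : ((τ : ℂ) ^ 2 - 1) = ((τ ^ 2 - 1 : ℝ) : ℂ) := by push_cast; ring
    rw [this]
    simp [Complex.exp_im, ← Complex.ofReal_pow]
  rw [Complex.mul_im, Complex.exp_im, Complex.exp_re] at him
  have hs : Real.sin z.im < 0 := Real.sin_neg_of_neg_of_neg_pi_lt h2 h1
  have he : 0 < Real.exp z.re := Real.exp_pos _
  have h0 : z.re * Real.sin z.im + z.im * Real.cos z.im = 0 := by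
    have h' : Real.exp z.re * (z.re * Real.sin z.im + z.im * Real.cos z.im) = 0 := by
      linear_combination him
    exact (mul_eq_zero.mp h').resolve_left (ne_of_gt he)
  have hx : z.re = -z.im * (Real.cos z.im / Real.sin z.im) := by
    rw [show -z.im * (Real.cos z.im / Real.sin z.im)
        = (-z.im * Real.cos z.im) / Real.sin z.im by ring, eq_div_iff (ne_of_lt hs)]
    linear_combination h0
  rw [hx]
  exact key z.im ⟨h1, h2⟩
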